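/- Let H be a graph of order n and μ a bijection from V(H) to V(K_n). Then the matching graph (H, K_n, μ) has minimum propagation time 1 if and only if H is connected. -/

import Mathlib

open SimpleGraph

variable {V : Type*}

/-- One simultaneous round of the color change rule: all currently forceable
vertices become black. -/
def forceStep (G : SimpleGraph V) (S : Set V) : Set V :=
  S ∪ {w | ∃ v ∈ S, G.Adj v w ∧ ∀ u, G.Adj v u → u ∉ S → u = w}

/-- The (cumulative) set of black vertices after `t` simultaneous rounds,
starting from `B`; so `B^{(t)} = propSet G B t \ propSet G B (t-1)`. -/
def propSet (G : SimpleGraph V) (B : Set V) : ℕ → Set V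
  | 0 => B
  | t + 1 => forceStep G (propSet G B t)

/-- `B` is a zero forcing set of `G`. -/
def IsZFSet (G : SimpleGraph V) (B : Set V) : Prop := ∃ t, propSet G B t = Set.univ

/-- The zero forcing number `Z(G)`. -/
noncomputable def zfNum (G : SimpleGraph V) : ℕ :=
  sInf {n | ∃ B : Set V, IsZFSet G B ∧ B.ncard = n}

/-- `B` is a minimum zero forcing set of `G`. -/
def IsMinZFSet (G : SimpleGraph V) (B : Set V) : Prop := IsZFSet G B ∧ B.ncard = zfNum G

/-- The propagation time `pt(G,B)` of a zero forcing set `B`. -/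
noncomputable def ptSet (G : SimpleGraph V) (B : Set V) : ℕ :=
  sInf {t | propSet G B t = Set.univ}

/-- The minimum propagation time `pt(G)`. -/
noncomputable def ptMin (G : SimpleGraph V) : ℕ :=
  sInf (ptSet G '' {B | IsMinZFSet G B})

/-- The maximum propagation time `PT(G)`. -/
noncomputable def ptMax (G : SimpleGraph V) : ℕ :=
  sSup (ptSet G '' {B | IsMinZFSet G B})

/-- `IsChronList G S L` : starting from black set `S`, the list `L` is a valid
chronological list of forces, performed one at a time, ending with all
vertices black. -/
def IsChronList (G : SimpleGraph V) : Set V → List (V × V) → Prop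
  | S, [] => S = Set.univ
  | S, (v, w) :: L =>
      v ∈ S ∧ w ∉ S ∧ G.Adj v w ∧ (∀ u, G.Adj v u → u ∉ S → u = w) ∧
        IsChronList G (insert w S) L

/-- `F` is a set of forces of `B`: the unordered set of forces of some
chronological list of forces of `B`. -/
def IsForceSet (G : SimpleGraph V) (B : Set V) (F : Set (V × V)) : Prop :=
  ∃ L : List (V × V), IsChronList G B L ∧ {p | p ∈ L} = F

/-- The terminus of a set of forces: the vertices performing no force. -/
def termSet (F : Set (V × V)) : Set V := {v | ∀ w, (v, w) ∉ F}

/-- The reverse set of forces. -/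
def revSet (F : Set (V × V)) : Set (V × V) := (fun p : V × V => (p.2, p.1)) '' F

/-- The (cumulative) set of black vertices after `t` rounds when propagating
using only the forces in `F`, starting from `B`;
so `F^{(t)} = fpropSet G B F t \ fpropSet G B F (t-1)`. -/
def fpropSet (G : SimpleGraph V) (B : Set V) (F : Set (V × V)) : ℕ → Set V
  | 0 => B
  | t + 1 => fpropSet G B F t ∪
      {w | ∃ v, (v, w) ∈ F ∧ v ∈ fpropSet G B F t ∧ w ∉ fpropSet G B F t ∧
        ∀ u, G.Adj v u → u ∉ fpropSet G B F t → u = w}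

/-- The propagation time `pt(G,F)` of a set of forces `F` of `B`. -/
noncomputable def ptForces (G : SimpleGraph V) (B : Set V) (F : Set (V × V)) : ℕ :=
  sInf {t | fpropSet G B F t = Set.univ}

/-- `B` is an efficient zero forcing set of `G`. -/
def IsEffZFSet (G : SimpleGraph V) (B : Set V) : Prop :=
  IsMinZFSet G B ∧ ptSet G B = ptMin G

/-- `F` is an efficient set of forces of the minimum zero forcing set `B`. -/
def IsEffForces (G : SimpleGraph V) (B : Set V) (F : Set (V × V)) : Prop :=
  IsMinZFSet G B ∧ IsForceSet G B F ∧ ptForces G B F = ptMin G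

/-- The matching graph `(H₁, H₂, μ)`: the disjoint union of `H₁` and `H₂`
together with the perfect matching edges `{a, μ a}`. -/
def matchGraph {α β : Type*} (H1 : SimpleGraph α) (H2 : SimpleGraph β) (μ : α ≃ β) :
    SimpleGraph (α ⊕ β) :=
  SimpleGraph.fromRel (fun x y => match x, y with
    | Sum.inl a, Sum.inl b => H1.Adj a b
    | Sum.inr a, Sum.inr b => H2.Adj a b
    | Sum.inl a, Sum.inr b => μ a = b
    | Sum.inr _, Sum.inl _ => False)


section Helpers

open Set

lemma subset_forceStep (G : SimpleGraph V) (S : Set V) : S ⊆ forceStep G S :=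
  Set.subset_union_left

lemma forceStep_mono (G : SimpleGraph V) {S S' : Set V} (h : S ⊆ S') :
    forceStep G S ⊆ forceStep G S' := by
  intro x hx
  rcases hx with hx | ⟨v, hv, hadj, hforce⟩
  · exact Or.inl (h hx)
  · exact Or.inr ⟨v, h hv, hadj, fun u hu hu' => hforce u hu fun c => hu' (h c)⟩

lemma propSet_subset_succ (G : SimpleGraph V) (B : Set V) (t : ℕ) :
    propSet G B t ⊆ propSet G B (t + 1) :=
  subset_forceStep G _

lemma propSet_mono_right (G : SimpleGraph V) (B : Set V) {s t : ℕ} (h : s ≤ t) :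
    propSet G B s ⊆ propSet G B t := by
  induction t with
  | zero => simp_all
  | succ t ih =>
    rcases Nat.lt_or_ge s (t + 1) with h' | h'
    · exact (ih (Nat.lt_succ_iff.mp h')).trans (propSet_subset_succ G B t)
    · have : s = t + 1 := le_antisymm h h'
      subst this; exact le_refl _

lemma mem_propSet_base (G : SimpleGraph V) {B : Set V} {x : V} (hx : x ∈ B) (t : ℕ) :
    x ∈ propSet G B t := propSet_mono_right G B (Nat.zero_le t) hx

lemma exists_forcer {G : SimpleGraph V} {S : Set V} {w : V}
    (hw : w ∈ forceStep G S) (hw' : w ∉ S) :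
    ∃ v ∈ S, G.Adj v w ∧ ∀ u, G.Adj v u → u ∉ S → u = w := by
  rcases hw with hw | hw
  · exact absurd hw hw'
  · exact hw

lemma forcer_data {G : SimpleGraph V} {B : Set V} {w : V} {t0 : ℕ}
    (hw : w ∈ propSet G B t0) (hwB : w ∉ B) :
    ∃ t < t0, w ∉ propSet G B t ∧
      ∃ v ∈ propSet G B t, G.Adj v w ∧ ∀ u, G.Adj v u → u ∉ propSet G B t → u = w := by
  classical
  set s : Set ℕ := {t | w ∈ propSet G B t} with hs
  have hne : s.Nonempty := ⟨t0, hw⟩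
  have hmem : sInf s ∈ s := Nat.sInf_mem hne
  have hτ0 : sInf s ≠ 0 := by
    intro h
    rw [h] at hmem
    exact hwB hmem
  obtain ⟨t, ht⟩ : ∃ t, sInf s = t + 1 :=
    ⟨sInf s - 1, (Nat.succ_pred_eq_of_pos (Nat.pos_of_ne_zero hτ0)).symm⟩
  have htlt : t < sInf s := by omega
  have hwnot : w ∉ propSet G B t := Nat.notMem_of_lt_sInf htlt
  have hwin : w ∈ forceStep G (propSet G B t) := by
    have h' : w ∈ propSet G B (t + 1) := by rw [← ht]; exact hmem
    exact h'
  refine ⟨t, ?_, hwnot, exists_forcer hwin hwnot⟩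
  have : sInf s ≤ t0 := Nat.sInf_le hw
  omega

lemma propSet_stuck {G : SimpleGraph V} {B : Set V} (h : forceStep G B = B) (t : ℕ) :
    propSet G B t = B := by
  induction t with
  | zero => rfl
  | succ t ih => show forceStep G (propSet G B t) = B; rw [ih, h]

lemma ncard_compl_le_of_forceStep_univ [Finite V] {G : SimpleGraph V} {B : Set V}
    (h : forceStep G B = Set.univ) : Bᶜ.ncard ≤ B.ncard := by
  classical
  have key : ∀ w : V, ∃ v, w ∉ B → v ∈ B ∧ G.Adj v w ∧ ∀ u, G.Adj v u → u ∉ B → u = w := by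
    intro w
    by_cases hw : w ∈ B
    · exact ⟨w, fun h' => absurd hw h'⟩
    · obtain ⟨v, h1, h2, h3⟩ := exists_forcer (h ▸ Set.mem_univ w) hw
      exact ⟨v, fun _ => ⟨h1, h2, h3⟩⟩
  choose f hf using key
  have hinj : Set.InjOn f Bᶜ := by
    intro w1 hw1 w2 hw2 hf12
    obtain ⟨hv1, hadj1, hcond1⟩ := hf w1 hw1
    obtain ⟨hv2, hadj2, hcond2⟩ := hf w2 hw2
    exact (hcond1 w2 (hf12 ▸ hadj2) hw2).symm
  calc Bᶜ.ncard = (f '' Bᶜ).ncard := (Set.ncard_image_of_injOn hinj).symm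
    _ ≤ B.ncard := Set.ncard_le_ncard (by rintro x ⟨w, hw, rfl⟩; exact (hf w hw).1)
      (Set.toFinite B)

end Helpers

section MG

variable {α : Type*} {n : ℕ} (H : SimpleGraph α) (μ : α ≃ Fin n)

lemma mg_adj_inl_inl {a b : α} :
    (matchGraph H ⊤ μ).Adj (Sum.inl a) (Sum.inl b) ↔ H.Adj a b := by
  simp only [matchGraph, fromRel_adj, ne_eq, Sum.inl.injEq]
  constructor
  · rintro ⟨hne, h | h⟩
    · exact h
    · exact h.symm
  · exact fun h => ⟨h.ne, Or.inl h⟩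

lemma mg_adj_inl_inr {a : α} {b : Fin n} :
    (matchGraph H ⊤ μ).Adj (Sum.inl a) (Sum.inr b) ↔ μ a = b := by
  simp only [matchGraph, fromRel_adj, ne_eq]
  constructor
  · rintro ⟨-, h | h⟩
    · exact h
    · exact h.elim
  · exact fun h => ⟨by simp, Or.inl h⟩

lemma mg_adj_inr_inl {a : α} {b : Fin n} :
    (matchGraph H ⊤ μ).Adj (Sum.inr b) (Sum.inl a) ↔ μ a = b := by
  rw [SimpleGraph.adj_comm]; exact mg_adj_inl_inr H μ

lemma mg_adj_inr_inr {b c : Fin n} :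
    (matchGraph H ⊤ μ).Adj (Sum.inr b) (Sum.inr c) ↔ b ≠ c := by
  simp only [matchGraph, fromRel_adj, ne_eq, Sum.inr.injEq, top_adj]
  tauto

lemma ncard_sumSet {β : Type*} [Finite α] [Finite β] (P : Set α) (Q : Set β) :
    (Sum.inl '' P ∪ Sum.inr '' Q : Set (α ⊕ β)).ncard = P.ncard + Q.ncard := by
  rw [Set.ncard_union_eq ?_ (Set.toFinite _) (Set.toFinite _),
    Set.ncard_image_of_injective _ Sum.inl_injective,
    Set.ncard_image_of_injective _ Sum.inr_injective]
  rw [Set.disjoint_left]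
  rintro x ⟨a, -, rfl⟩ ⟨b, -, h⟩
  exact nomatch h

/-- The K-side forces everything in one round. -/
lemma mg_Kside_prop_one :
    propSet (matchGraph H ⊤ μ) (Set.range Sum.inr) 1 = Set.univ := by
  apply Set.eq_univ_of_univ_subset
  rintro x -
  show x ∈ forceStep _ _
  cases x with
  | inr b => exact Or.inl ⟨b, rfl⟩
  | inl a =>
    refine Or.inr ⟨Sum.inr (μ a), ⟨μ a, rfl⟩, (mg_adj_inr_inl H μ).mpr rfl, ?_⟩
    intro u hu hunot
    cases u with
    | inr c => exact absurd ⟨c, rfl⟩ hunot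
    | inl a' =>
      have : μ a' = μ a := (mg_adj_inr_inl H μ).mp hu
      rw [μ.injective this]

/-- Lower bound: any zero forcing set of the matching graph with `Kₙ` has
at least `n` vertices when `H` is connected. -/
lemma mg_connected_zf_lower [Fintype α] (hcon : H.Connected) {B : Set (α ⊕ Fin n)}
    (hB : IsZFSet (matchGraph H ⊤ μ) B) : n ≤ B.ncard := by
  classical
  have hαne : Nonempty α := hcon.nonempty
  set G := matchGraph H ⊤ μ with hG
  obtain ⟨T, hT⟩ := hB
  have hfin : Nat.card (Fin n) = n := by simp
  rcases Nat.lt_or_ge n 2 with hn2 | hn2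
  · rcases Nat.eq_zero_or_pos n with rfl | hn1
    · exact Nat.zero_le _
    · -- n = 1 : B must be nonempty
      have hBne : B.Nonempty := by
        rcases Set.eq_empty_or_nonempty B with rfl | h
        · exfalso
          have hstuck : forceStep G (∅ : Set (α ⊕ Fin n)) = ∅ := by
            refine Set.Subset.antisymm ?_ (Set.empty_subset _)
            rintro x (hx | ⟨v, hv, -⟩)
            · exact hx
            · exact hv
          have hPT : propSet G (∅ : Set (α ⊕ Fin n)) T = ∅ := propSet_stuck hstuck T
          rw [hT] at hPT
          exact (Set.univ_eq_empty_iff.mp hPT).false (Sum.inr ⟨0, hn1⟩)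
        · exact h
      have := Set.ncard_pos (Set.toFinite B) |>.mpr hBne
      omega
  · by_contra hlt
    push_neg at hlt
    set P : ℕ → Set (α ⊕ Fin n) := propSet G B with hP
    set Yt : ℕ → Set (Fin n) := fun t => {b | Sum.inr b ∈ P t} with hYt
    have hsne : {t | n - 1 ≤ (Yt t).ncard}.Nonempty := by
      refine ⟨T, ?_⟩
      have hYT : Yt T = Set.univ := by
        ext b
        show Sum.inr b ∈ P T ↔ _
        rw [hT]
        simp
      show n - 1 ≤ (Yt T).ncard
      rw [hYT, Set.ncard_univ, hfin]
      omega
    set ts := sInf {t | n - 1 ≤ (Yt t).ncard} with hts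
    have h1 : n - 1 ≤ (Yt ts).ncard := Nat.sInf_mem hsne
    have h2 : ∀ t, t < ts → (Yt t).ncard < n - 1 := by
      intro t ht
      have := Nat.notMem_of_lt_sInf (hts ▸ ht)
      simp only [Set.mem_setOf_eq, not_le] at this
      exact this
    set S := P ts with hSdef
    set X : Set α := {a | Sum.inl a ∈ S} with hX
    have hSdecomp : S = Sum.inl '' X ∪ Sum.inr '' (Yt ts) := by
      ext x
      cases x with
      | inl a =>
        simp only [Set.mem_union, Set.mem_image, hX, Set.mem_setOf_eq]
        constructor
        · intro h; exact Or.inl ⟨a, h, rfl⟩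
        · rintro (⟨a', h, he⟩ | ⟨b, h, he⟩)
          · cases Sum.inl_injective he; exact h
          · exact nomatch he
      | inr b =>
        simp only [Set.mem_union, Set.mem_image, hYt, Set.mem_setOf_eq]
        constructor
        · intro h; exact Or.inr ⟨b, h, rfl⟩
        · rintro (⟨a', h, he⟩ | ⟨b', h, he⟩)
          · exact nomatch he
          · cases Sum.inr_injective he; exact h
    have hBS : B ⊆ S := fun x hx => mem_propSet_base G hx ts
    have hcardS : S.ncard = X.ncard + (Yt ts).ncard := by
      rw [hSdecomp, ncard_sumSet]
    have hcardSB : (S \ B).ncard + B.ncard = S.ncard :=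
      Set.ncard_diff_add_ncard_of_subset hBS (Set.toFinite S)
    have white2 : ∀ t, t < ts → ∃ c1 c2 : Fin n, c1 ≠ c2 ∧
        Sum.inr c1 ∉ P t ∧ Sum.inr c2 ∉ P t := by
      intro t ht
      have hY := h2 t ht
      have hcompl : (Yt t).ncard + (Yt t)ᶜ.ncard = n := by
        rw [Set.ncard_add_ncard_compl, hfin]
      have hgt : 1 < (Yt t)ᶜ.ncard := by omega
      obtain ⟨c1, hc1, c2, hc2, hne⟩ := (Set.one_lt_ncard (Set.toFinite _)).mp hgt
      exact ⟨c1, c2, hne, hc1, hc2⟩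
    have key : ∀ w : α ⊕ Fin n, ∃ a : α, w ∈ S \ B →
        ∃ t, t < ts ∧ w ∉ P t ∧ Sum.inl a ∈ P t ∧ G.Adj (Sum.inl a) w ∧
          ∀ u, G.Adj (Sum.inl a) u → u ∉ P t → u = w := by
      intro w
      by_cases hw : w ∈ S \ B
      · obtain ⟨t, ht, hwP, v, hv, hadj, hcond⟩ := forcer_data (hw.1 : w ∈ P ts) hw.2
        cases v with
        | inl a => exact ⟨a, fun _ => ⟨t, ht, hwP, hv, hadj, hcond⟩⟩
        | inr d =>
          exfalso
          obtain ⟨c1, c2, hne, hc1, hc2⟩ := white2 t ht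
          have hd : Sum.inr d ∈ P t := hv
          have hd1 : d ≠ c1 := fun h => hc1 (h ▸ hd)
          have hd2 : d ≠ c2 := fun h => hc2 (h ▸ hd)
          have e1 := hcond _ ((mg_adj_inr_inr H μ).mpr hd1) hc1
          have e2 := hcond _ ((mg_adj_inr_inr H μ).mpr hd2) hc2
          rw [← e2] at e1
          exact hne (Sum.inr_injective e1)
      · exact ⟨Classical.arbitrary α, fun h => absurd h hw⟩
    choose f hf using key
    have himg : ∀ w ∈ S \ B, f w ∈ X := by
      intro w hw
      obtain ⟨t, ht, -, hin, -, -⟩ := hf w hw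
      exact propSet_mono_right G B ht.le hin
    have hinj : Set.InjOn f (S \ B) := by
      intro w1 hw1 w2 hw2 heq
      obtain ⟨t1, ht1, hw1P, hin1, hadj1, hcond1⟩ := hf w1 hw1
      obtain ⟨t2, ht2, hw2P, hin2, hadj2, hcond2⟩ := hf w2 hw2
      rcases le_total t1 t2 with h | h
      · exact (hcond1 w2 (heq ▸ hadj2) fun c => hw2P (propSet_mono_right G B h c)).symm
      · exact hcond2 w1 (heq ▸ hadj1) fun c => hw1P (propSet_mono_right G B h c)
    have hDX : (S \ B).ncard ≤ X.ncard := by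
      calc (S \ B).ncard = (f '' (S \ B)).ncard := (Set.ncard_image_of_injOn hinj).symm
        _ ≤ X.ncard := Set.ncard_le_ncard
            (by rintro x ⟨w, hw, rfl⟩; exact himg w hw) (Set.toFinite X)
    have hYeq : (Yt ts).ncard = n - 1 := by omega
    have hBeq : B.ncard = n - 1 := by omega
    have hXD : X.ncard = (S \ B).ncard := by omega
    obtain ⟨b0, hb0⟩ : ∃ b0, b0 ∉ Yt ts := by
      by_contra h
      push_neg at h
      have : Yt ts = Set.univ := Set.eq_univ_iff_forall.mpr h
      rw [this, Set.ncard_univ, hfin] at hYeq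
      omega
    have hb0S : Sum.inr b0 ∉ S := hb0
    rcases Set.eq_empty_or_nonempty X with hXe | ⟨x0, hx0⟩
    · -- propagation is stuck at B
      have hBX : ∀ a : α, Sum.inl a ∉ B := by
        intro a ha
        have : a ∈ X := hBS ha
        rw [hXe] at this
        exact this
      have hstuck : forceStep G B = B := by
        refine Set.Subset.antisymm ?_ (subset_forceStep G B)
        intro x hx
        by_contra hxB
        obtain ⟨v, hv, hadj, hcond⟩ := exists_forcer hx hxB
        cases v with
        | inl a => exact hBX a hv
        | inr d =>
          have hu1 : G.Adj (Sum.inr d) (Sum.inl (μ.symm d)) :=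
            (mg_adj_inr_inl H μ).mpr (μ.apply_symm_apply d)
          have e1 := hcond _ hu1 (hBX (μ.symm d))
          have hdY : d ∈ Yt ts := hBS hv
          have hbd : d ≠ b0 := fun h => hb0 (h ▸ hdY)
          have hu2 : G.Adj (Sum.inr d) (Sum.inr b0) := (mg_adj_inr_inr H μ).mpr hbd
          have e2 := hcond _ hu2 fun h => hb0 (hBS h)
          rw [← e1] at e2
          exact nomatch e2
      have hPB : P T = B := propSet_stuck hstuck T
      rw [hT] at hPB
      exact hb0 (hBS (hPB ▸ Set.mem_univ (Sum.inr b0)))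
    · -- X nonempty; by connectivity X = univ, contradiction at b0's partner
      have hsurj : f '' (S \ B) = X := by
        refine Set.eq_of_subset_of_ncard_le ?_ ?_ (Set.toFinite X)
        · rintro x ⟨w, hw, rfl⟩; exact himg w hw
        · rw [Set.ncard_image_of_injOn hinj]; omega
      have hclosed : ∀ a ∈ X, ∀ y, H.Adj a y → y ∈ X := by
        intro a ha y hadjy
        rw [← hsurj] at ha
        obtain ⟨w, hw, rfl⟩ := ha
        obtain ⟨t, ht, hwP, hin, hadj, hcond⟩ := hf w hw
        by_cases hy : Sum.inl y ∈ P t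
        · exact propSet_mono_right G B ht.le hy
        · have hyw := hcond (Sum.inl y) ((mg_adj_inl_inl H μ).mpr hadjy) hy
          show Sum.inl y ∈ S
          rw [hyw]
          exact hw.1
      have hXuniv : X = Set.univ := by
        rw [Set.eq_univ_iff_forall]
        intro a
        have hre : H.Reachable x0 a := hcon.preconnected x0 a
        obtain ⟨p⟩ := hre
        suffices h : ∀ (u v : α), H.Walk u v → u ∈ X → v ∈ X from h x0 a p hx0
        intro u v p
        induction p with
        | nil => exact id
        | cons hadj p ih => exact fun hu => ih (hclosed _ hu _ hadj)
      have ha0 : μ.symm b0 ∈ X := hXuniv ▸ Set.mem_univ _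
      rw [← hsurj] at ha0
      obtain ⟨w, hw, hfw⟩ := ha0
      obtain ⟨t, ht, hwP, hin, hadj, hcond⟩ := hf w hw
      have hadjb : G.Adj (Sum.inl (f w)) (Sum.inr b0) :=
        (mg_adj_inl_inr H μ).mpr (by rw [hfw]; exact μ.apply_symm_apply b0)
      have hnb : Sum.inr b0 ∉ P t := fun h => hb0S (propSet_mono_right G B ht.le h)
      have hwb := hcond _ hadjb hnb
      exact hb0S (hwb ▸ hw.1)


/-- If `H` is disconnected (and nonempty), the matching graph with `Kₙ` has a
zero forcing set of size `n - 1`. -/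
lemma mg_disconnected_small_zf [Fintype α] (hne : Nonempty α) (hdis : ¬ H.Connected) :
    ∃ B : Set (α ⊕ Fin n), IsZFSet (matchGraph H ⊤ μ) B ∧ B.ncard + 1 = n := by
  classical
  set G := matchGraph H ⊤ μ with hG
  have hcardα : Nat.card α = n := by rw [Nat.card_congr μ]; simp
  have hpre : ¬ H.Preconnected := fun h => hdis ⟨h⟩
  rw [SimpleGraph.Preconnected] at hpre
  push_neg at hpre
  obtain ⟨a0, y0, hnr⟩ := hpre
  set C : Set α := {x | H.Reachable a0 x} with hC
  have ha0C : a0 ∈ C := Reachable.refl a0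
  have hy0C : y0 ∉ C := hnr
  have hCadj : ∀ x y, H.Adj x y → (x ∈ C ↔ y ∈ C) := fun x y h =>
    ⟨fun hx => hx.trans h.reachable, fun hy => hy.trans h.symm.reachable⟩
  set B : Set (α ⊕ Fin n) := Sum.inl '' Cᶜ ∪ Sum.inr '' (μ '' (C \ {a0})) with hB
  set S1 : Set (α ⊕ Fin n) := Sum.inl '' Cᶜ ∪ Sum.inr '' ({μ a0}ᶜ) with hS1
  set S2 : Set (α ⊕ Fin n) := Sum.inl '' Cᶜ ∪ Sum.inr '' Set.univ with hS2
  have claim1 : S1 ⊆ forceStep G B := by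
    rintro x (⟨a, ha, rfl⟩ | ⟨b, hb, rfl⟩)
    · exact Or.inl (Or.inl ⟨a, ha, rfl⟩)
    · have hbne : b ≠ μ a0 := hb
      by_cases hc : μ.symm b ∈ C
      · refine Or.inl (Or.inr ⟨b, ⟨μ.symm b, ⟨hc, ?_⟩, μ.apply_symm_apply b⟩, rfl⟩)
        intro h
        rw [Set.mem_singleton_iff] at h
        exact hbne (by rw [← h, μ.apply_symm_apply])
      · refine Or.inr ⟨Sum.inl (μ.symm b), Or.inl ⟨μ.symm b, hc, rfl⟩,
          (mg_adj_inl_inr H μ).mpr (μ.apply_symm_apply b), ?_⟩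
        intro u hu hunot
        cases u with
        | inl a' =>
          exfalso
          apply hunot
          have hadj' : H.Adj (μ.symm b) a' := (mg_adj_inl_inl H μ).mp hu
          exact Or.inl ⟨a', fun hany => hc ((hCadj _ _ hadj').mpr hany), rfl⟩
        | inr c =>
          have : μ (μ.symm b) = c := (mg_adj_inl_inr H μ).mp hu
          rw [μ.apply_symm_apply] at this
          rw [this]
  have claim2 : S2 ⊆ forceStep G S1 := by
    rintro x (hx | ⟨b, -, rfl⟩)
    · exact Or.inl (Or.inl hx)
    · by_cases hb : b = μ a0
      · subst hb
        have hy0ne : μ y0 ≠ μ a0 := fun h => hy0C (μ.injective h ▸ ha0C)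
        refine Or.inr ⟨Sum.inr (μ y0), Or.inr ⟨μ y0, hy0ne, rfl⟩,
          (mg_adj_inr_inr H μ).mpr hy0ne, ?_⟩
        intro u hu hunot
        cases u with
        | inl a' =>
          exfalso
          apply hunot
          have : μ a' = μ y0 := (mg_adj_inr_inl H μ).mp hu
          have ha' : a' = y0 := μ.injective this
          exact Or.inl ⟨a', ha' ▸ hy0C, rfl⟩
        | inr c =>
          by_contra hcc
          apply hunot
          refine Or.inr ⟨c, ?_, rfl⟩
          intro h
          rw [Set.mem_singleton_iff] at h
          exact hcc (by rw [h])
      · exact Or.inl (Or.inr ⟨b, hb, rfl⟩)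
  have claim3 : Set.univ ⊆ forceStep G S2 := by
    rintro x -
    cases x with
    | inr b => exact Or.inl (Or.inr ⟨b, trivial, rfl⟩)
    | inl a =>
      by_cases ha : a ∈ C
      · refine Or.inr ⟨Sum.inr (μ a), Or.inr ⟨μ a, trivial, rfl⟩,
          (mg_adj_inr_inl H μ).mpr rfl, ?_⟩
        intro u hu hunot
        cases u with
        | inl a' =>
          have : μ a' = μ a := (mg_adj_inr_inl H μ).mp hu
          rw [μ.injective this]
        | inr c => exact absurd (Or.inr ⟨c, trivial, rfl⟩) hunot
      · exact Or.inl (Or.inl ⟨a, ha, rfl⟩)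
  refine ⟨B, ⟨3, ?_⟩, ?_⟩
  · apply Set.eq_univ_of_univ_subset
    have e1 : S1 ⊆ propSet G B 1 := claim1
    have e2 : S2 ⊆ propSet G B 2 := fun x hx => forceStep_mono G e1 (claim2 hx)
    exact fun x hx => forceStep_mono G e2 (claim3 hx)
  · have h1 : B.ncard = Cᶜ.ncard + (μ '' (C \ {a0})).ncard := ncard_sumSet _ _
    rw [Set.ncard_image_of_injective _ μ.injective] at h1
    have h2 : (C \ {a0}).ncard = C.ncard - 1 := Set.ncard_diff_singleton_of_mem ha0C
    have h3 : C.ncard + Cᶜ.ncard = Nat.card α := Set.ncard_add_ncard_compl C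
    have h4 : 1 ≤ C.ncard := (Set.ncard_pos (Set.toFinite C)).mpr ⟨a0, ha0C⟩
    rw [hcardα] at h3
    omega

end MG

/-- For a graph `H` of order `n`, the matching graph `(H, Kₙ, μ)` has minimum
propagation time `1` if and only if `H` is connected. -/
theorem matchGraph_complete_pt_one_iff {α : Type*} [Finite α] {n : ℕ}
    (H : SimpleGraph α) (μ : α ≃ Fin n) :
    ptMin (matchGraph H (⊤ : SimpleGraph (Fin n)) μ) = 1 ↔ H.Connected := by
  classical
  have : Fintype α := Fintype.ofFinite α
  set G := matchGraph H (⊤ : SimpleGraph (Fin n)) μ with hG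
  have hfin : Nat.card (Fin n) = n := by simp
  have hcardα : Nat.card α = n := by rw [Nat.card_congr μ]; exact hfin
  have hcardV : Nat.card (α ⊕ Fin n) = n + n := by rw [Nat.card_sum, hcardα, hfin]
  rcases isEmpty_or_nonempty α with hemp | hne
  · -- both sides are false
    have hn0 : n = 0 := by
      rw [← hcardα]
      exact Nat.card_of_isEmpty
    subst hn0
    haveI : IsEmpty (α ⊕ Fin 0) := by infer_instance
    have huniv : (Set.univ : Set (α ⊕ Fin 0)) = ∅ := Set.univ_eq_empty_iff.mpr inferInstance
    have hzf : IsZFSet G (∅ : Set (α ⊕ Fin 0)) := ⟨0, huniv.symm⟩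
    have hz : zfNum G = 0 :=
      Nat.eq_zero_of_le_zero (Nat.sInf_le ⟨∅, hzf, Set.ncard_empty _⟩)
    have hmin : IsMinZFSet G (∅ : Set (α ⊕ Fin 0)) := ⟨hzf, by rw [hz]; exact Set.ncard_empty _⟩
    have hpt : ptSet G (∅ : Set (α ⊕ Fin 0)) = 0 :=
      Nat.eq_zero_of_le_zero (Nat.sInf_le (huniv.symm : propSet G ∅ 0 = Set.univ))
    have hptmin : ptMin G = 0 :=
      Nat.eq_zero_of_le_zero (Nat.sInf_le ⟨∅, hmin, hpt⟩)
    constructor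
    · intro h
      rw [hptmin] at h
      omega
    · intro h
      exact absurd h.nonempty (not_nonempty_iff.mpr hemp)
  · have hn1 : 1 ≤ n := by
      have hne' : Nonempty (Fin n) := ⟨μ (Classical.arbitrary α)⟩
      exact Fin.pos_iff_nonempty.mpr hne'
    have hKzf : IsZFSet G (Set.range Sum.inr) := ⟨1, mg_Kside_prop_one H μ⟩
    have hKcard : (Set.range (Sum.inr : Fin n → α ⊕ Fin n)).ncard = n := by
      rw [← Set.image_univ, Set.ncard_image_of_injective _ Sum.inr_injective,
        Set.ncard_univ, hfin]
    have hzfle : zfNum G ≤ n := Nat.sInf_le ⟨_, hKzf, hKcard⟩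
    have hminexists : ∃ B : Set (α ⊕ Fin n), IsZFSet G B ∧ B.ncard = zfNum G :=
      Nat.sInf_mem (⟨n, ⟨_, hKzf, hKcard⟩⟩ :
        Set.Nonempty {m | ∃ B : Set (α ⊕ Fin n), IsZFSet G B ∧ B.ncard = m})
    by_cases hcon : H.Connected
    · simp only [hcon, iff_true]
      have hzfge : n ≤ zfNum G := by
        obtain ⟨B, hBzf, hBcard⟩ := hminexists
        rw [← hBcard]
        exact mg_connected_zf_lower H μ hcon hBzf
      have hzf : zfNum G = n := le_antisymm hzfle hzfge
      have hmin : IsMinZFSet G (Set.range Sum.inr) := ⟨hKzf, by rw [hKcard, hzf]⟩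
      have hptK : ptSet G (Set.range Sum.inr) = 1 := by
        apply le_antisymm
        · exact Nat.sInf_le (mg_Kside_prop_one H μ)
        · rcases Nat.eq_zero_or_pos (ptSet G (Set.range Sum.inr)) with h0 | h
          · exfalso
            rcases Nat.sInf_eq_zero.mp h0 with h0' | h0'
            · have hun : Set.range (Sum.inr : Fin n → α ⊕ Fin n) = Set.univ := h0'
              have : Sum.inl (Classical.arbitrary α) ∈ Set.range (Sum.inr : Fin n → α ⊕ Fin n) := by
                rw [hun]
                exact Set.mem_univ _
              obtain ⟨b, hb⟩ := this
              exact nomatch hb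
            · exact (Set.eq_empty_iff_forall_notMem.mp h0' 1) (mg_Kside_prop_one H μ)
          · exact h
      apply le_antisymm
      · exact Nat.sInf_le ⟨_, hmin, hptK⟩
      · refine le_csInf ⟨ptSet G (Set.range Sum.inr), ⟨Set.range Sum.inr, hmin, rfl⟩⟩ ?_
        rintro x ⟨B, hBmin, rfl⟩
        have hBneq : B ≠ Set.univ := by
          intro h
          have hBc : B.ncard = n + n := by rw [h, Set.ncard_univ, hcardV]
          rw [hBmin.2, hzf] at hBc
          omega
        rcases Nat.eq_zero_or_pos (ptSet G B) with h0 | h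
        · exfalso
          rcases Nat.sInf_eq_zero.mp h0 with h0' | h0'
          · exact hBneq h0'
          · obtain ⟨t, ht⟩ := hBmin.1
            exact (Set.eq_empty_iff_forall_notMem.mp h0' t) ht
        · exact h
    · simp only [hcon, iff_false]
      intro hpt1
      obtain ⟨B1, hB1zf, hB1card⟩ := mg_disconnected_small_zf H μ hne hcon
      have hzflt : zfNum G < n := by
        have hmem1 : B1.ncard ∈ {m | ∃ B : Set (α ⊕ Fin n), IsZFSet G B ∧ B.ncard = m} :=
          ⟨B1, hB1zf, rfl⟩
        have h5 : zfNum G ≤ B1.ncard := Nat.sInf_le hmem1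
        omega
      have h2le : 2 ≤ ptMin G := by
        apply le_csInf
        · obtain ⟨B, hBzf, hBcard⟩ := hminexists
          exact ⟨ptSet G B, B, ⟨hBzf, hBcard⟩, rfl⟩
        · rintro x ⟨B, hBmin, rfl⟩
          have hcard : B.ncard < n := by rw [hBmin.2]; exact hzflt
          have hBneq : B ≠ Set.univ := by
            intro h
            rw [h, Set.ncard_univ, hcardV] at hcard
            omega
          have hnot1 : propSet G B 1 ≠ Set.univ := by
            intro h
            have hle : Bᶜ.ncard ≤ B.ncard := ncard_compl_le_of_forceStep_univ (G := G) (B := B) h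
            have htot := Set.ncard_add_ncard_compl B
            rw [hcardV] at htot
            omega
          obtain ⟨t, ht⟩ := hBmin.1
          have hmem : ptSet G B ∈ {t | propSet G B t = Set.univ} := Nat.sInf_mem ⟨t, ht⟩
          have h0 : ptSet G B ≠ 0 := by
            intro h
            rw [h] at hmem
            exact hBneq hmem
          have h1 : ptSet G B ≠ 1 := by
            intro h
            rw [h] at hmem
            exact hnot1 hmem
          omega
      omega
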